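/- arXiv:0903.4957 — 7 statements merged into one kernel-verified Lean document; each statement's English description precedes it below -/
import Mathlib

section
/- Let (X,d) be a metric space and ν : X → ℝ be 1-Lipschitz with respect to d. Then the function d∞(a,b) = θ(d(a,b))/(1 + min(ν(a),ν(b))), where θ(t) = t/(1+t), satisfies the triangle inequality: d∞(a,c) ≤ d∞(a,b) + d∞(b,c) for all a,b,c ∈ X with ν ≥ 0. -/
lemma embounded_key (u v m : ℝ) (hu : 0 ≤ u) (hv : 0 ≤ v) (hm : 0 ≤ m) :
    ((u + v) / (1 + (u + v))) / (1 + m) ≤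
      (u / (1 + u)) / (1 + m) + (v / (1 + v)) / (1 + m + u) := by
  have h1 : (0:ℝ) < 1 + u := by linarith
  have h2 : (0:ℝ) < 1 + v := by linarith
  have h3 : (0:ℝ) < 1 + (u + v) := by linarith
  have h4 : (0:ℝ) < 1 + m := by linarith
  have h5 : (0:ℝ) < 1 + m + u := by linarith
  rw [div_div, div_div, div_div, div_add_div _ _ (by positivity) (by positivity),
    div_le_div_iff₀ (by positivity) (by positivity)]
  ring_nf
  nlinarith [mul_nonneg hu hv, mul_nonneg hm hu, mul_nonneg hm hv,
    mul_nonneg (mul_nonneg hu hv) hm, sq_nonneg u, sq_nonneg v,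
    mul_nonneg (mul_nonneg hu hu) hv, mul_nonneg (mul_nonneg hu hv) hv,
    mul_nonneg (mul_nonneg hm hm) (mul_nonneg hu hv)]

lemma embounded_theta_mono (s t : ℝ) (hs : 0 ≤ s) (hst : s ≤ t) :
    s / (1 + s) ≤ t / (1 + t) := by
  rw [div_le_div_iff₀ (by linarith) (by linarith)]
  nlinarith

/-- The embounded distance `d∞(a,b) = θ(d(a,b))/(1 + min(ν(a),ν(b)))`,
with `θ(t) = t/(1+t)` and `ν` a nonnegative 1-Lipschitz gauge,
satisfies the triangle inequality. -/
theorem embounded_triangle {X : Type*} [MetricSpace X]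
    (ν : X → ℝ) (hν0 : ∀ x, 0 ≤ ν x)
    (hνlip : ∀ x y, |ν x - ν y| ≤ dist x y)
    (dInf : X → X → ℝ)
    (hdInf : ∀ a b, dInf a b =
      (dist a b / (1 + dist a b)) / (1 + min (ν a) (ν b))) :
    ∀ a b c : X, dInf a c ≤ dInf a b + dInf b c := by
  intro a b c
  rw [hdInf, hdInf, hdInf]
  set u := dist a b with hu
  set v := dist b c with hv
  set w := dist a c with hw
  have hu0 : 0 ≤ u := dist_nonneg
  have hv0 : 0 ≤ v := dist_nonneg
  have hw0 : 0 ≤ w := dist_nonneg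
  have htri : w ≤ u + v := dist_triangle a b c
  set m1 := min (ν a) (ν b) with hm1def
  set m2 := min (ν b) (ν c) with hm2def
  set m := min (ν a) (ν c) with hmdef
  have hm10 : 0 ≤ m1 := le_min (hν0 a) (hν0 b)
  have hm20 : 0 ≤ m2 := le_min (hν0 b) (hν0 c)
  have hm0 : 0 ≤ m := le_min (hν0 a) (hν0 c)
  have hba : ν b ≤ ν a + u := by
    have := abs_sub_le_iff.mp (hνlip b a)
    have hd : dist b a = u := dist_comm b a
    linarith [this.1]
  have hbc : ν b ≤ ν c + v := by
    have := abs_sub_le_iff.mp (hνlip b c)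
    linarith [this.1]
  have hm21 : m2 ≤ m1 + u := by
    have h1 : m2 ≤ ν b := min_le_left _ _
    rcases le_total (ν a) (ν b) with h | h
    · have : m1 = ν a := min_eq_left h
      linarith
    · have : m1 = ν b := min_eq_right h
      linarith
  have hm12 : m1 ≤ m2 + v := by
    have h1 : m1 ≤ ν b := min_le_right _ _
    rcases le_total (ν b) (ν c) with h | h
    · have : m2 = ν b := min_eq_left h
      linarith
    · have : m2 = ν c := min_eq_right h
      linarith
  have hθw : w / (1 + w) ≤ (u + v) / (1 + (u + v)) :=
    embounded_theta_mono w (u + v) hw0 htri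
  rcases le_total m1 m2 with hc | hc
  · -- m1 ≤ m2, so m1 ≤ m
    have hm1m : m1 ≤ m := le_min (min_le_left _ _) (le_trans hc (min_le_right _ _))
    have step1 : (w / (1 + w)) / (1 + m) ≤ ((u + v) / (1 + (u + v))) / (1 + m1) := by
      gcongr <;> first | linarith | positivity
    have step2 := embounded_key u v m1 hu0 hv0 hm10
    have step3 : (v / (1 + v)) / (1 + m1 + u) ≤ (v / (1 + v)) / (1 + m2) :=
      div_le_div_of_nonneg_left (by positivity) (by linarith) (by linarith)
    linarith
  · -- m2 ≤ m1, so m2 ≤ m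
    have hm2m : m2 ≤ m := le_min (le_trans hc (min_le_left _ _)) (min_le_right _ _)
    have step1 : (w / (1 + w)) / (1 + m) ≤ ((v + u) / (1 + (v + u))) / (1 + m2) := by
      have : (u + v) / (1 + (u + v)) = (v + u) / (1 + (v + u)) := by ring_nf
      rw [← this]
      gcongr <;> first | linarith | positivity
    have step2 := embounded_key v u m2 hv0 hu0 hm20
    have step3 : (u / (1 + u)) / (1 + m2 + v) ≤ (u / (1 + u)) / (1 + m1) :=
      div_le_div_of_nonneg_left (by positivity) (by linarith) (by linarith)
    linarith
end

section
/- Let (X,d) be a metric space and ν : X → [0,∞) be 1-Lipschitz, and set d∞(a,b) = θ(d(a,b))/(1 + min(ν(a),ν(b))) with θ(t)=t/(1+t). For r' > r ≥ 0, the d∞-neighbourhood of radius θ(r'-r)/(1+r) of the set {x : ν(x) ≤ r} is contained in {x : ν(x) < r'}. -/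
/-- The `d∞`-neighbourhood of radius `θ(r'-r)/(1+r)` of the ν-ball of radius `r`
is contained in the open ν-ball of radius `r'`. -/
theorem embounded_ball_neighbourhood {X : Type*} [MetricSpace X]
    (ν : X → ℝ) (hν0 : ∀ x, 0 ≤ ν x)
    (hνlip : ∀ x y, |ν x - ν y| ≤ dist x y)
    (dInf : X → X → ℝ)
    (hdInf : ∀ a b, dInf a b =
      (dist a b / (1 + dist a b)) / (1 + min (ν a) (ν b))) :
    ∀ r r' : ℝ, 0 ≤ r → r < r' →
      {b : X | ∃ a, ν a ≤ r ∧ dInf a b < ((r' - r) / (1 + (r' - r))) / (1 + r)}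
        ⊆ {x : X | ν x < r'} := by
  intro r r' hr hrr' b hb
  obtain ⟨a, ha, hd⟩ := hb
  rw [hdInf] at hd
  set d := dist a b with hdd
  have hd0 : 0 ≤ d := dist_nonneg
  have hmin0 : 0 ≤ min (ν a) (ν b) := le_min (hν0 a) (hν0 b)
  have hminr : min (ν a) (ν b) ≤ r := le_trans (min_le_left _ _) ha
  have h1 : d / (1 + d) / (1 + r) ≤ d / (1 + d) / (1 + min (ν a) (ν b)) := by
    apply div_le_div_of_nonneg_left _ (by linarith) (by linarith)
    positivity
  have h2 : d / (1 + d) < (r' - r) / (1 + (r' - r)) := by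
    have hlt := lt_of_le_of_lt h1 hd
    have hr1 : (0:ℝ) < 1 + r := by linarith
    exact (div_lt_div_iff_of_pos_right hr1).mp hlt
  have h3 : d < r' - r := by
    have h1d : (0:ℝ) < 1 + d := by linarith
    have h1s : (0:ℝ) < 1 + (r' - r) := by linarith
    rw [div_lt_div_iff₀ h1d h1s] at h2
    nlinarith
  have := hνlip b a
  rw [abs_le] at this
  have : ν b - ν a ≤ d := by
    have := this.2
    rw [dist_comm] at this
    linarith
  simp only [Set.mem_setOf_eq]
  linarith
end

section
/- Let (X,d) be a complete metric space, ν : X → [0,∞) 1-Lipschitz with bounded ν-balls, and d∞ the embounded metric d∞(a,b) = θ(d(a,b))/(1 + min(ν(a),ν(b))), θ(t)=t/(1+t). If (aₙ) is d∞-Cauchy and there is r such that ν(aₙ) ≤ r for infinitely many n, then (aₙ) converges in d∞ to some point of X. -/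
private lemma theta_mono {u v : ℝ} (hu : 0 ≤ u) (huv : u ≤ v) :
    u / (1 + u) ≤ v / (1 + v) := by
  have h1 : (0:ℝ) < 1 + u := by linarith
  have h2 : (0:ℝ) < 1 + v := by linarith
  rw [div_le_div_iff₀ h1 h2]; nlinarith

/-- A `d∞`-Cauchy sequence whose gauge is bounded infinitely often converges
(in `d∞`) to a point of the space. -/
theorem embounded_cauchy_bounded_converges {X : Type*} [MetricSpace X]
    [CompleteSpace X]
    (ν : X → ℝ) (hν0 : ∀ x, 0 ≤ ν x)
    (hνlip : ∀ x y, |ν x - ν y| ≤ dist x y)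
    (hballs : ∀ r : ℝ, Bornology.IsBounded {x : X | ν x ≤ r})
    (dInf : X → X → ℝ)
    (hdInf : ∀ a b, dInf a b =
      (dist a b / (1 + dist a b)) / (1 + min (ν a) (ν b)))
    (a : ℕ → X)
    (hCauchy : ∀ ε > (0:ℝ), ∃ N : ℕ, ∀ m ≥ N, ∀ n ≥ N, dInf (a m) (a n) < ε)
    (r : ℝ) (hr : ∀ N : ℕ, ∃ n ≥ N, ν (a n) ≤ r) :
    ∃ x : X, Filter.Tendsto (fun n => dInf (a n) x) Filter.atTop (nhds 0) := by
  obtain ⟨n₀, -, hn₀⟩ := hr 0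
  have hr0 : (0:ℝ) ≤ r := le_trans (hν0 (a n₀)) hn₀
  have hpos : ∀ b c : X, 0 < 1 + min (ν b) (ν c) := fun b c => by
    have := le_min (hν0 b) (hν0 c); linarith
  have key : ∀ b c : X,
      dist b c / (1 + dist b c) = dInf b c * (1 + min (ν b) (ν c)) := by
    intro b c
    rw [hdInf, div_mul_cancel₀ _ (hpos b c).ne']
  have hnn : ∀ b c : X, 0 ≤ dInf b c := by
    intro b c
    rw [hdInf]
    have h1 : (0:ℝ) < 1 + dist b c := by linarith [dist_nonneg (x := b) (y := c)]
    exact div_nonneg (div_nonneg dist_nonneg h1.le) (hpos b c).le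
  have hle : ∀ b c : X, dInf b c ≤ dist b c := by
    intro b c
    rw [hdInf]
    have h1 : (0:ℝ) < 1 + dist b c := by linarith [dist_nonneg (x := b) (y := c)]
    calc dist b c / (1 + dist b c) / (1 + min (ν b) (ν c))
        ≤ dist b c / (1 + dist b c) := by
          apply div_le_self (by positivity)
          have := le_min (hν0 b) (hν0 c); linarith
      _ ≤ dist b c := div_le_self dist_nonneg (by linarith [dist_nonneg (x := b) (y := c)])
  -- tail bound on ν
  obtain ⟨N₀, hN₀⟩ := hCauchy (1/(2*(1+r))) (by positivity)
  obtain ⟨m₀, hm₀N, hm₀r⟩ := hr N₀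
  have htail : ∀ n ≥ N₀, ν (a n) ≤ r + 1 := by
    intro n hn
    have h1 := hN₀ n hn m₀ hm₀N
    have hmin : min (ν (a n)) (ν (a m₀)) ≤ r := le_trans (min_le_right _ _) hm₀r
    have hminnn : 0 ≤ min (ν (a n)) (ν (a m₀)) := le_min (hν0 _) (hν0 _)
    have hdnn := hnn (a n) (a m₀)
    have hθ : dist (a n) (a m₀) / (1 + dist (a n) (a m₀)) < 1/2 := by
      rw [key]
      have h1r : (0:ℝ) < 1 + r := by linarith
      calc dInf (a n) (a m₀) * (1 + min (ν (a n)) (ν (a m₀)))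
          ≤ dInf (a n) (a m₀) * (1 + r) := by nlinarith
        _ < (1/(2*(1+r))) * (1 + r) := by
            exact mul_lt_mul_of_pos_right h1 h1r
        _ = 1/2 := by field_simp
    have h1d : (0:ℝ) < 1 + dist (a n) (a m₀) := by
      linarith [dist_nonneg (x := a n) (y := a m₀)]
    have hdist : dist (a n) (a m₀) < 1 := by
      rw [div_lt_iff₀ h1d] at hθ; linarith
    have := le_trans (le_abs_self _) (hνlip (a n) (a m₀))
    linarith
  -- the sequence is Cauchy for `d`
  have hc : CauchySeq a := by
    rw [Metric.cauchySeq_iff]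
    intro ε hε
    have hs : 0 < ε/(1+ε) := by positivity
    have h2r : (0:ℝ) < 2 + r := by linarith
    obtain ⟨N₁, hN₁⟩ := hCauchy ((ε/(1+ε))/(2+r)) (by positivity)
    refine ⟨max N₀ N₁, fun m hm n hn => ?_⟩
    have h1 := hN₁ m (le_trans (le_max_right _ _) hm) n (le_trans (le_max_right _ _) hn)
    have hνm := htail m (le_trans (le_max_left _ _) hm)
    have hminnn := le_min (hν0 (a m)) (hν0 (a n))
    have hminle : min (ν (a m)) (ν (a n)) ≤ r + 1 := le_trans (min_le_left _ _) hνm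
    have hdnn := hnn (a m) (a n)
    have hθ : dist (a m) (a n) / (1 + dist (a m) (a n)) < ε/(1+ε) := by
      rw [key]
      calc dInf (a m) (a n) * (1 + min (ν (a m)) (ν (a n)))
          ≤ dInf (a m) (a n) * (2 + r) := by nlinarith
        _ < ((ε/(1+ε))/(2+r)) * (2 + r) := mul_lt_mul_of_pos_right h1 h2r
        _ = ε/(1+ε) := div_mul_cancel₀ _ h2r.ne'
    by_contra hcon
    push_neg at hcon
    have := theta_mono hε.le hcon
    linarith
  obtain ⟨x, hx⟩ := cauchySeq_tendsto_of_complete hc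
  refine ⟨x, ?_⟩
  have hdist0 : Filter.Tendsto (fun n => dist (a n) x) Filter.atTop (nhds 0) :=
    tendsto_iff_dist_tendsto_zero.mp hx
  exact squeeze_zero (fun n => hnn _ _) (fun n => hle _ _) hdist0
end

section
/- Let X, Y, Z be gauged spaces and f : X → Y, g : Y → Z maps respecting continuity moduli δ_f, δ_g respectively under ν (meaning: if ν(x),ν(y) < 1/ε and d(x,y) < δ(ε) then d(f(x),f(y)) ≤ ε and ν(f(x)) ≤ 1/δ(ε)), with δ_f, δ_g ≤ id. Then g ∘ f respects the modulus δ_f ∘ δ_g ∘ δ_f under ν. -/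
/-- `f` respects the modulus `δ` under the gauges `νX`, `νY`. -/
def Respects {X Y : Type*} [PseudoMetricSpace X] [PseudoMetricSpace Y]
    (νX : X → ℝ) (νY : Y → ℝ) (δ : ℝ → ℝ) (f : X → Y) : Prop :=
  ∀ ε > (0:ℝ), ∀ x y : X, νX x < 1 / ε → νX y < 1 / ε → dist x y < δ ε →
    dist (f x) (f y) ≤ ε ∧ νY (f x) ≤ 1 / δ ε

def IsModulus (δ : ℝ → ℝ) : Prop :=
  (∀ ε > (0:ℝ), δ ε > 0) ∧
  (∀ ε ε' : ℝ, 0 < ε → ε ≤ ε' → δ ε ≤ δ ε') ∧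
  (∀ ε > (0:ℝ), δ ε = sSup (δ '' Set.Ioo 0 ε))

private lemma one_div_swap {p q : ℝ} (hp : 0 < p) (hq : 0 < q) (h : p ≤ 1 / q) :
    q ≤ 1 / p := by
  rw [le_div_iff₀ hq] at h
  rw [le_div_iff₀ hp]
  nlinarith

/-- Composition of maps between gauged spaces respecting moduli `≤ id` respects
the composed modulus `δf ∘ δg ∘ δf`. -/
theorem respects_comp {X Y Z : Type*}
    [PseudoMetricSpace X] [PseudoMetricSpace Y] [PseudoMetricSpace Z]
    (νX : X → ℝ) (νY : Y → ℝ) (νZ : Z → ℝ)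
    (hνX : ∀ x y, |νX x - νX y| ≤ dist x y)
    (hνY : ∀ x y, |νY x - νY y| ≤ dist x y)
    (hνZ : ∀ x y, |νZ x - νZ y| ≤ dist x y)
    (f : X → Y) (g : Y → Z) (δf δg : ℝ → ℝ)
    (hδf : IsModulus δf) (hδg : IsModulus δg)
    (hδf_le : ∀ ε > (0:ℝ), δf ε ≤ ε) (hδg_le : ∀ ε > (0:ℝ), δg ε ≤ ε)
    (hf : Respects νX νY δf f) (hg : Respects νY νZ δg g) :
    Respects νX νZ (δf ∘ δg ∘ δf) (g ∘ f) := by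
  obtain ⟨hfpos, hfmono, hfsup⟩ := hδf
  obtain ⟨hgpos, hgmono, hgsup⟩ := hδg
  intro ε hε x y hx hy hd
  simp only [Function.comp] at hd ⊢
  set a := δf ε with ha_def
  have ha : 0 < a := hfpos ε hε
  set b := δg a with hb_def
  have hb : 0 < b := hgpos a ha
  have hc : 0 < δf b := hfpos b hb
  have haε : a ≤ ε := hδf_le ε hε
  have hba : b ≤ a := hδg_le a ha
  have hcb : δf b ≤ b := hδf_le b hb
  -- dist x y < δf ε
  have hdε : dist x y < δf ε := hd.trans_le (hfmono b ε hb (hba.trans haε))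
  -- νY bounds at parameter ε
  have hfx := hf ε hε x y hx hy hdε
  have hfy := hf ε hε y x hy hx (by rwa [dist_comm])
  have hνfx : νY (f x) ≤ 1 / a := hfx.2
  have hνfy : νY (f y) ≤ 1 / a := hfy.2
  -- get t ∈ Ioo 0 b with dist x y < δf t, to get strict dist (f x) (f y) < b
  have hne : (δf '' Set.Ioo 0 b).Nonempty :=
    ⟨δf (b/2), ⟨b/2, ⟨half_pos hb, half_lt_self hb⟩, rfl⟩⟩
  rw [hfsup b hb] at hd
  obtain ⟨_, ⟨t, ht, rfl⟩, hdt⟩ := exists_lt_of_lt_csSup hne hd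
  have htε : t ≤ ε := (ht.2.le.trans hba).trans haε
  have hxt : νX x < 1 / t := hx.trans_le (one_div_le_one_div_of_le ht.1 htε)
  have hyt : νX y < 1 / t := hy.trans_le (one_div_le_one_div_of_le ht.1 htε)
  have hdfb : dist (f x) (f y) < b := ((hf t ht.1 x y hxt hyt hdt).1).trans_lt ht.2
  -- get s₀ ∈ Ioo 0 a with dist (f x) (f y) < δg s₀
  have hne' : (δg '' Set.Ioo 0 a).Nonempty :=
    ⟨δg (a/2), ⟨a/2, ⟨half_pos ha, half_lt_self ha⟩, rfl⟩⟩
  have hdfb' : dist (f x) (f y) < sSup (δg '' Set.Ioo 0 a) := by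
    rwa [← hgsup a ha]
  obtain ⟨_, ⟨s₀, hs₀, rfl⟩, hds₀⟩ := exists_lt_of_lt_csSup hne' hdfb'
  -- apply hg at s₀ for the distance bound
  have hνfx' : νY (f x) < 1 / s₀ :=
    hνfx.trans_lt (one_div_lt_one_div_of_lt hs₀.1 hs₀.2)
  have hνfy' : νY (f y) < 1 / s₀ :=
    hνfy.trans_lt (one_div_lt_one_div_of_lt hs₀.1 hs₀.2)
  have hg₀ := hg s₀ hs₀.1 (f x) (f y) hνfx' hνfy' hds₀
  constructor
  · exact hg₀.1.trans (hs₀.2.le.trans haε)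
  · -- νZ (g (f x)) ≤ 1 / δf b ; suffices νZ (g (f x)) ≤ 1 / b
    have key : νZ (g (f x)) ≤ 1 / b := by
      rcases le_or_gt (νZ (g (f x))) 0 with h0 | h0
      · exact h0.trans (by positivity)
      · -- show δg s ≤ 1 / νZ (g (f x)) for all s ∈ Ioo 0 a, take sSup
        have hub : ∀ u ∈ δg '' Set.Ioo 0 a, u ≤ 1 / νZ (g (f x)) := by
          rintro _ ⟨s, hs, rfl⟩
          rcases le_or_gt s s₀ with hss | hss
          · have : νZ (g (f x)) ≤ 1 / δg s₀ := hg₀.2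
            have h1 : δg s₀ ≤ 1 / νZ (g (f x)) :=
              one_div_swap h0 (hgpos s₀ hs₀.1) this
            exact (hgmono s s₀ hs.1 hss).trans h1
          · have hνfxs : νY (f x) < 1 / s :=
              hνfx.trans_lt (one_div_lt_one_div_of_lt hs.1 hs.2)
            have hνfys : νY (f y) < 1 / s :=
              hνfy.trans_lt (one_div_lt_one_div_of_lt hs.1 hs.2)
            have hds : dist (f x) (f y) < δg s :=
              hds₀.trans_le (hgmono s₀ s hs₀.1 hss.le)
            exact one_div_swap h0 (hgpos s hs.1)
              (hg s hs.1 (f x) (f y) hνfxs hνfys hds).2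
        have : b ≤ 1 / νZ (g (f x)) := by
          rw [hb_def, hgsup a ha]
          exact csSup_le hne' hub
        exact one_div_swap hb h0 this
    exact key.trans (one_div_le_one_div_of_le hc hcb)
end

section
/- A map f between gauged spaces is uniformly continuous under ν (i.e., respects some continuity modulus under ν) if and only if its restriction to every bounded set is uniformly continuous and has bounded image. -/
/-- A map between gauged spaces is uniformly continuous under the gauge iff its
restriction to every bounded set (equivalently, every ν-ball) is uniformly
continuous and has bounded image. -/
theorem uniformly_continuous_under_gauge_iff {X Y : Type*}
    [PseudoMetricSpace X] [PseudoMetricSpace Y]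
    (νX : X → ℝ) (νY : Y → ℝ)
    (hνX0 : ∀ x, 0 ≤ νX x) (hνY0 : ∀ y, 0 ≤ νY y)
    (hνX : ∀ x y, |νX x - νX y| ≤ dist x y)
    (hνY : ∀ x y, |νY x - νY y| ≤ dist x y)
    (hballsX : ∀ r : ℝ, Bornology.IsBounded {x : X | νX x ≤ r})
    (hballsY : ∀ r : ℝ, Bornology.IsBounded {y : Y | νY y ≤ r})
    (f : X → Y) :
    (∃ δ : ℝ → ℝ, (∀ ε > (0:ℝ), δ ε > 0) ∧ Respects νX νY δ f) ↔
    (∀ r : ℝ,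
      (∀ ε > (0:ℝ), ∃ η > (0:ℝ), ∀ x y : X, νX x ≤ r → νX y ≤ r →
        dist x y < η → dist (f x) (f y) ≤ ε) ∧
      (∃ s : ℝ, ∀ x : X, νX x ≤ r → νY (f x) ≤ s)) := by
  constructor
  · rintro ⟨δ, hδpos, hδ⟩ r
    rcases le_or_gt 0 r with hr | hr
    · constructor
      · intro ε hε
        set ε' := min ε (1/(r+1)) with hε'def
        have hε'pos : 0 < ε' := lt_min hε (by positivity)
        refine ⟨δ ε', hδpos ε' hε'pos, fun x y hx hy hd => ?_⟩
        have hlt : r < 1/ε' := by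
          have h1 : ε' ≤ 1/(r+1) := min_le_right _ _
          have h2 : r + 1 ≤ 1/ε' := by
            rw [le_div_iff₀ hε'pos]
            calc (r+1)*ε' ≤ (r+1)*(1/(r+1)) :=
                  mul_le_mul_of_nonneg_left h1 (by linarith)
              _ = 1 := by field_simp
          linarith
        have := (hδ ε' hε'pos x y (lt_of_le_of_lt hx hlt) (lt_of_le_of_lt hy hlt) hd).1
        exact this.trans (min_le_left _ _)
      · set ε' := 1/(r+1) with hε'def
        have hε'pos : 0 < ε' := by positivity
        refine ⟨1/δ ε', fun x hx => ?_⟩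
        have hlt : r < 1/ε' := by
          rw [hε'def, one_div_one_div]; linarith
        have hd : dist x x < δ ε' := by
          simpa using hδpos ε' hε'pos
        exact (hδ ε' hε'pos x x (hx.trans_lt hlt) (hx.trans_lt hlt) hd).2
    · constructor
      · exact fun ε hε => ⟨1, one_pos, fun x y hx _ _ => by
          exact absurd hx (not_le.mpr (lt_of_lt_of_le hr (hνX0 x)))⟩
      · exact ⟨0, fun x hx => absurd hx (not_le.mpr (lt_of_lt_of_le hr (hνX0 x)))⟩
  · intro h
    have key : ∀ ε : ℝ, 0 < ε → ∃ d, 0 < d ∧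
        ((∀ x y, νX x ≤ 1/ε → νX y ≤ 1/ε → dist x y < d → dist (f x) (f y) ≤ ε) ∧
        (∀ x, νX x ≤ 1/ε → νY (f x) ≤ 1/d)) := by
      intro ε hε
      obtain ⟨η, hη, hηs⟩ := (h (1/ε)).1 ε hε
      obtain ⟨s, hss⟩ := (h (1/ε)).2
      have h1 : (0:ℝ) < max s 0 + 1 := by positivity
      refine ⟨min η (1/(max s 0 + 1)), lt_min hη (by positivity),
        fun x y hx hy hd => hηs x y hx hy (hd.trans_le (min_le_left _ _)),
        fun x hx => ?_⟩
      have h2 : 1/(1/(max s 0 + 1)) ≤ 1/(min η (1/(max s 0 + 1))) :=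
        one_div_le_one_div_of_le (lt_min hη (by positivity)) (min_le_right _ _)
      rw [one_div_one_div] at h2
      have h3 := le_max_left s 0
      calc νY (f x) ≤ s := hss x hx
        _ ≤ max s 0 + 1 := by linarith
        _ ≤ _ := h2
    choose! d hd0 hd12 using key
    exact ⟨d, hd0, fun ε hε x y hx hy hdist =>
      ⟨(hd12 ε hε).1 x y hx.le hy.le hdist, (hd12 ε hε).2 x hx.le⟩⟩
end

section
/- Let E be a real Banach space, b₀,…,b_{n-1} ∈ E linearly independent with s = min{‖Σ λᵢ bᵢ‖ : Σ|λᵢ| = 1} > 0, and c₀,…,c_{n-1} ∈ E with ‖bᵢ − cᵢ‖ ≤ δ for all i, where δ = sε/(2n) and 0 < ε < 1. Then there exists a bounded linear operator S : E → E with S(bᵢ) = bᵢ − cᵢ for all i and ‖S‖ ≤ ε/2; consequently T = I − S is a bijective bounded linear map with e^{−ε}‖v‖ ≤ ‖T v‖ ≤ e^{ε}‖v‖ for all v, and T(bᵢ) = cᵢ. -/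
/-- Perturbing a linearly independent tuple `b` to a nearby tuple `c` gives a
small operator `S` with `S bᵢ = bᵢ - cᵢ`, so that `T = I - S` is an
`ε`-automorphism sending `b` to `c`. -/
theorem small_perturbation_automorphism {E : Type*} [NormedAddCommGroup E]
    [NormedSpace ℝ E] [CompleteSpace E] {n : ℕ}
    (b c : Fin n → E) (hb : LinearIndependent ℝ b)
    (s : ℝ) (hs : 0 < s)
    (hsmin : ∀ lam : Fin n → ℝ, (∑ i, |lam i|) = 1 →
      s ≤ ‖∑ i, lam i • b i‖)
    (ε : ℝ) (hε0 : 0 < ε) (hε1 : ε < 1)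
    (hbc : ∀ i, ‖b i - c i‖ ≤ s * ε / (2 * n)) :
    ∃ S : E →L[ℝ] E,
      (∀ i, S (b i) = b i - c i) ∧ ‖S‖ ≤ ε / 2 ∧
      Function.Bijective (fun v => v - S v) ∧
      (∀ v : E, Real.exp (-ε) * ‖v‖ ≤ ‖v - S v‖ ∧
        ‖v - S v‖ ≤ Real.exp ε * ‖v‖) ∧
      (∀ i, b i - S (b i) = c i) := by
  classical
  set p : Submodule ℝ E := Submodule.span ℝ (Set.range b) with hp
  let B : Module.Basis (Fin n) ℝ p := Module.Basis.span hb
  have hcoe : ∀ y : p, (y : E) = ∑ j, B.repr y j • b j := by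
    intro y
    conv_lhs => rw [← B.sum_repr y]
    push_cast
    refine Finset.sum_congr rfl fun j _ => ?_
    rw [Module.Basis.span_apply]
  have key : ∀ (y : p) (i : Fin n), |B.repr y i| ≤ (1/s) * ‖(y : E)‖ := by
    intro y i
    set t := ∑ j, |B.repr y j| with ht
    have hti : |B.repr y i| ≤ t := by
      rw [ht]
      exact Finset.single_le_sum (f := fun j => |B.repr y j|)
        (fun j _ => abs_nonneg _) (Finset.mem_univ i)
    have ht0 : 0 ≤ t := Finset.sum_nonneg fun j _ => abs_nonneg _
    rcases eq_or_lt_of_le ht0 with h0 | hpos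
    · have : |B.repr y i| ≤ 0 := by rw [h0]; exact hti
      have h1 : |B.repr y i| = 0 := le_antisymm this (abs_nonneg _)
      rw [h1]; positivity
    · have hsum : (∑ j, |B.repr y j / t|) = 1 := by
        simp only [abs_div, abs_of_pos hpos]
        rw [← Finset.sum_div, ← ht, div_self (ne_of_gt hpos)]
      have hmin := hsmin (fun j => B.repr y j / t) hsum
      have heq : (∑ j, (B.repr y j / t) • b j) = (1/t) • (y : E) := by
        rw [hcoe y, Finset.smul_sum]
        congr 1; ext j
        rw [smul_smul]; congr 1; field_simp
      rw [heq, norm_smul, Real.norm_eq_abs, abs_of_pos (by positivity : (0:ℝ) < 1/t)] at hmin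
      have hst : s * t ≤ ‖(y : E)‖ := by
        have h := mul_le_mul_of_nonneg_left hmin (le_of_lt hpos)
        calc s * t = t * s := by ring
        _ ≤ t * (1/t * ‖(y:E)‖) := h
        _ = ‖(y:E)‖ := by field_simp
      have ht2 : t ≤ ‖(y:E)‖ / s := (le_div_iff₀ hs).mpr (by linarith)
      calc |B.repr y i| ≤ t := hti
      _ ≤ ‖(y:E)‖ / s := ht2
      _ = (1/s) * ‖(y : E)‖ := by ring
  let f : Fin n → (p →L[ℝ] ℝ) := fun i =>
    LinearMap.mkContinuous (B.coord i) (1/s) (fun y => by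
      simpa [Module.Basis.coord_apply] using key y i)
  choose g hg hgn using fun i => exists_extension_norm_eq p (f i)
  have hgb : ∀ i, ‖g i‖ ≤ 1/s := by
    intro i; rw [hgn i]
    exact LinearMap.mkContinuous_norm_le _ (by positivity) _
  set S : E →L[ℝ] E := ∑ i, (g i).smulRight (b i - c i) with hS
  have hgbj : ∀ i j, g i (b j) = if j = i then 1 else 0 := by
    intro i j
    have hbj : b j ∈ p := Submodule.subset_span ⟨j, rfl⟩
    have hBj : (⟨b j, hbj⟩ : p) = B j := by
      apply Subtype.ext
      exact congrArg Subtype.val (Module.Basis.span_apply hb j).symm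
    have := hg i ⟨b j, hbj⟩
    rw [this, hBj]
    simp [f, LinearMap.mkContinuous_apply, Module.Basis.coord_apply, Module.Basis.repr_self,
      Finsupp.single_apply]
  have hSb : ∀ j, S (b j) = b j - c j := by
    intro j
    rw [hS]
    simp only [ContinuousLinearMap.sum_apply, ContinuousLinearMap.smulRight_apply, hgbj]
    rw [Finset.sum_eq_single j]
    · simp
    · intro i _ hij; simp [Ne.symm hij]
    · intro h; exact absurd (Finset.mem_univ j) h
  have hSn : ‖S‖ ≤ ε / 2 := by
    calc ‖S‖ ≤ ∑ i, ‖(g i).smulRight (b i - c i)‖ := norm_sum_le _ _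
    _ ≤ ∑ _i : Fin n, ε/(2*n) := by
        apply Finset.sum_le_sum; intro i _
        rw [ContinuousLinearMap.norm_smulRight_apply]
        have hn : (0:ℝ) < n := by exact_mod_cast i.pos
        calc ‖g i‖ * ‖b i - c i‖ ≤ (1/s) * (s*ε/(2*n)) := by
              apply mul_le_mul (hgb i) (hbc i) (norm_nonneg _) (by positivity)
        _ = ε/(2*n) := by field_simp
    _ ≤ ε/2 := by
        rw [Finset.sum_const, Finset.card_univ, Fintype.card_fin, nsmul_eq_mul]
        rcases Nat.eq_zero_or_pos n with h | h
        · simp [h]; positivity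
        · have hn : (0:ℝ) < n := by exact_mod_cast h
          rw [show (n:ℝ) * (ε/(2*n)) = ε/2 by field_simp]
  refine ⟨S, hSb, hSn, ?_, ?_, fun i => by rw [hSb i]; abel⟩
  · have hS1 : ‖S‖ < 1 := lt_of_le_of_lt hSn (by linarith)
    let u : (E →L[ℝ] E)ˣ := Units.oneSub S hS1
    have hfun : (fun v => v - S v) = ⇑(u : E →L[ℝ] E) := by
      ext v; simp [u, Units.oneSub]
    rw [hfun]
    refine ⟨Function.LeftInverse.injective (g := ⇑(↑u⁻¹ : E →L[ℝ] E)) ?_,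
      Function.RightInverse.surjective (g := ⇑(↑u⁻¹ : E →L[ℝ] E)) ?_⟩
    · intro v
      show (↑(u⁻¹ * u) : E →L[ℝ] E) v = v
      rw [Units.val_mul, u.inv_mul]; rfl
    · intro v
      show (↑(u * u⁻¹) : E →L[ℝ] E) v = v
      rw [Units.val_mul, u.mul_inv]; rfl
  · intro v
    have hSv : ‖S v‖ ≤ (ε/2) * ‖v‖ :=
      le_trans (S.le_opNorm v) (mul_le_mul_of_nonneg_right hSn (norm_nonneg v))
    have h1 : ‖v - S v‖ ≤ ‖v‖ + ‖S v‖ := norm_sub_le _ _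
    have hlow : ‖v‖ - ‖S v‖ ≤ ‖v - S v‖ := norm_sub_norm_le _ _
    have hexp1 : ε + 1 ≤ Real.exp ε := Real.add_one_le_exp ε
    constructor
    · have hexp : Real.exp (-ε) ≤ 1 - ε/2 := by
        rw [Real.exp_neg, inv_le_iff_one_le_mul₀ (Real.exp_pos ε)]
        nlinarith [Real.exp_pos ε]
      nlinarith [norm_nonneg v, norm_nonneg (S v)]
    · nlinarith [norm_nonneg v]
end

section
/- Let X, Y be gauged spaces, f : X × Y → [0,∞) a map respecting modulus δ_f under ν, and suppose there is a constant C such that f(x,y) = g(y) whenever ν(x) ≥ C, where g : Y → [0,∞) respects δ_g under ν. Then h(y) = sup_{x ∈ X} f(x,y) ∨ g(y) is well defined (finite) and respects the modulus δ_h(ε) = min(δ_g(ε), δ_f(min(ε, 1/C))) under ν. -/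
/-- Supremum over the first variable of an eventually constant predicate is
well defined and respects the modulus `δ_h(ε) = δ_g(ε) ∧ δ_f(ε ∧ 1/C)`. -/
theorem sup_eventually_constant_respects {X Y : Type*}
    [PseudoMetricSpace X] [PseudoMetricSpace Y]
    (νX : X → ℝ) (νY : Y → ℝ)
    (hνX0 : ∀ x, 0 ≤ νX x) (hνY0 : ∀ y, 0 ≤ νY y)
    (hνX : ∀ x y, |νX x - νX y| ≤ dist x y)
    (hνY : ∀ x y, |νY x - νY y| ≤ dist x y)
    (f : X × Y → ℝ) (g : Y → ℝ)
    (hf0 : ∀ p, 0 ≤ f p) (hg0 : ∀ y, 0 ≤ g y)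
    (δf δg : ℝ → ℝ)
    (hδf0 : ∀ ε > (0:ℝ), δf ε > 0) (hδg0 : ∀ ε > (0:ℝ), δg ε > 0)
    (hf : Respects (fun p : X × Y => max (νX p.1) (νY p.2)) (fun t : ℝ => |t|) δf f)
    (hg : Respects νY (fun t : ℝ => |t|) δg g)
    (C : ℝ) (hC : 0 < C)
    (hec : ∀ x y, C ≤ νX x → f (x, y) = g y)
    (h : Y → ℝ)
    (hh : ∀ y, h y = max (g y) (sSup (Set.range fun x : X => f (x, y)))) :
    (∀ y, BddAbove (Set.range fun x : X => f (x, y))) ∧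
    Respects νY (fun t : ℝ => |t|)
      (fun ε => min (δg ε) (δf (min ε (1 / C)))) h := by
  have bdd : ∀ y, BddAbove (Set.range fun x : X => f (x, y)) := by
    intro y
    set M : ℝ := max C (νY y) + 1 with hM
    have hM0 : 0 < M := by
      have : (0:ℝ) < max C (νY y) := lt_max_of_lt_left hC
      linarith
    have hε₀ : (0:ℝ) < 1 / M := by positivity
    have hinv : 1 / (1 / M) = M := one_div_one_div M
    refine ⟨max (g y) (1 / δf (1 / M)), ?_⟩
    rintro _ ⟨x, rfl⟩
    show f (x, y) ≤ _
    by_cases hx : C ≤ νX x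
    · rw [hec x y hx]; exact le_max_left _ _
    · push_neg at hx
      have hcond : max (νX x) (νY y) < 1 / (1 / M) := by
        rw [hinv]
        have h1 : νX x < M := by
          have : C ≤ max C (νY y) := le_max_left _ _
          linarith
        have h2 : νY y < M := by
          have : νY y ≤ max C (νY y) := le_max_right _ _
          linarith
        exact max_lt h1 h2
      have hd : dist ((x, y) : X × Y) (x, y) < δf (1 / M) := by
        simpa using hδf0 _ hε₀
      have := (hf (1 / M) hε₀ (x, y) (x, y) hcond hcond hd).2
      exact le_trans (le_trans (le_abs_self _) this) (le_max_right _ _)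
  refine ⟨bdd, ?_⟩
  intro ε hε y z hy hz hd
  set ε' : ℝ := min ε (1 / C) with hε'def
  have hε' : 0 < ε' := lt_min hε (by positivity)
  have hδg : 0 < δg ε := hδg0 ε hε
  have hδf : 0 < δf ε' := hδf0 ε' hε'
  have hδh : (0:ℝ) < min (δg ε) (δf ε') := lt_min hδg hδf
  have hdg : dist y z < δg ε := lt_of_lt_of_le hd (min_le_left _ _)
  have hdf : dist y z < δf ε' := lt_of_lt_of_le hd (min_le_right _ _)
  have hgε := hg ε hε y z hy hz hdg
  have hgy := hg ε hε y y hy hy (by simpa using hδg)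
  have hinvC : C ≤ 1 / ε' := by
    rw [le_div_iff₀ hε']
    calc C * ε' ≤ C * (1 / C) := mul_le_mul_of_nonneg_left (min_le_right _ _) hC.le
      _ = 1 := by field_simp
  have hinvε : 1 / ε ≤ 1 / ε' := one_div_le_one_div_of_le hε' (min_le_left _ _)
  have hy' : νY y < 1 / ε' := lt_of_lt_of_le hy hinvε
  have hz' : νY z < 1 / ε' := lt_of_lt_of_le hz hinvε
  -- per-x estimates for small νX x
  have hfx : ∀ x : X, νX x < C →
      dist (f (x, y)) (f (x, z)) ≤ ε' ∧ |f (x, y)| ≤ 1 / δf ε' := by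
    intro x hx
    have hcy : max (νX x) (νY y) < 1 / ε' := max_lt (lt_of_lt_of_le hx hinvC) hy'
    have hcz : max (νX x) (νY z) < 1 / ε' := max_lt (lt_of_lt_of_le hx hinvC) hz'
    have hdp : dist ((x, y) : X × Y) (x, z) < δf ε' := by
      rw [Prod.dist_eq]
      simpa [dist_nonneg] using hdf
    exact hf ε' hε' (x, y) (x, z) hcy hcz hdp
  have key : ∀ x : X, |f (x, y) - f (x, z)| ≤ ε := by
    intro x
    by_cases hx : C ≤ νX x
    · rw [hec x y hx, hec x z hx]
      simpa [Real.dist_eq] using hgε.1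
    · push_neg at hx
      have := (hfx x hx).1
      rw [Real.dist_eq] at this
      exact this.trans (min_le_left _ _)
  set Sy := sSup (Set.range fun x : X => f (x, y)) with hSy
  set Sz := sSup (Set.range fun x : X => f (x, z)) with hSz
  have hSynn : 0 ≤ Sy := Real.sSup_nonneg (by rintro _ ⟨x, rfl⟩; exact hf0 _)
  have hSznn : 0 ≤ Sz := Real.sSup_nonneg (by rintro _ ⟨x, rfl⟩; exact hf0 _)
  have h1 : Sy ≤ Sz + ε := by
    apply Real.sSup_le
    · rintro _ ⟨x, rfl⟩
      have hle : f (x, y) ≤ f (x, z) + ε := by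
        have hk := key x
        rw [abs_sub_le_iff] at hk
        linarith [hk.1]
      have : f (x, z) ≤ Sz := le_csSup (bdd z) ⟨x, rfl⟩
      linarith
    · linarith
  have h2 : Sz ≤ Sy + ε := by
    apply Real.sSup_le
    · rintro _ ⟨x, rfl⟩
      have hle : f (x, z) ≤ f (x, y) + ε := by
        have hk := key x
        rw [abs_sub_le_iff] at hk
        linarith [hk.2]
      have : f (x, y) ≤ Sy := le_csSup (bdd y) ⟨x, rfl⟩
      linarith
    · linarith
  have hSup : |Sy - Sz| ≤ ε := abs_sub_le_iff.2 ⟨by linarith, by linarith⟩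
  constructor
  · -- distance estimate
    rw [hh y, hh z, Real.dist_eq]
    have hgd : |g y - g z| ≤ ε := by simpa [Real.dist_eq] using hgε.1
    calc |max (g y) Sy - max (g z) Sz| ≤ max |g y - g z| |Sy - Sz| :=
          abs_max_sub_max_le_max _ _ _ _
      _ ≤ ε := max_le hgd hSup
  · -- gauge estimate
    have hmin_g : 1 / δg ε ≤ 1 / min (δg ε) (δf ε') :=
      one_div_le_one_div_of_le hδh (min_le_left _ _)
    have hmin_f : 1 / δf ε' ≤ 1 / min (δg ε) (δf ε') :=
      one_div_le_one_div_of_le hδh (min_le_right _ _)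
    have hgy' : g y ≤ 1 / δg ε := le_trans (le_abs_self _) hgy.2
    have hSyle : Sy ≤ 1 / min (δg ε) (δf ε') := by
      apply Real.sSup_le
      · rintro _ ⟨x, rfl⟩
        show f (x, y) ≤ _
        by_cases hx : C ≤ νX x
        · rw [hec x y hx]; exact hgy'.trans hmin_g
        · push_neg at hx
          exact le_trans (le_trans (le_abs_self _) (hfx x hx).2) hmin_f
      · positivity
    have hhy : h y = max (g y) Sy := hh y
    have hhynn : 0 ≤ h y := by rw [hhy]; exact le_trans (hg0 y) (le_max_left _ _)
    show |h y| ≤ 1 / min (δg ε) (δf ε')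
    rw [abs_of_nonneg hhynn, hhy]
    exact max_le (hgy'.trans hmin_g) hSyle
end
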